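/- Let P be a finite poset of rank n and suppose the ab-index Ψ_P(a,b) = Σ_{S⊆[n]} h_S(P) w_S can be written as Φ^d·d + Φ^a·a + Φ^b·b with cd-polynomials Φ^d, Φ^a, Φ^b having non-negative coefficients. Then the h-vector (h_0, ..., h_n) of Δ_P defined by h_i = Σ_{|S|=i} h_S(P) is unimodal. -/

import Mathlib

open Classical MvPolynomial

/-- The variable `a` of the non-commutative polynomial ring `ℤ⟨a,b⟩`. -/
noncomputable def abA : FreeAlgebra ℤ (Fin 2) := FreeAlgebra.ι ℤ 0

/-- The variable `b` of the non-commutative polynomial ring `ℤ⟨a,b⟩`. -/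
noncomputable def abB : FreeAlgebra ℤ (Fin 2) := FreeAlgebra.ι ℤ 1

/-- cd-monomials (words in `c = a+b` and `d = ab+ba`), as elements of `ℤ⟨a,b⟩`. -/
def cdMonomials : Set (FreeAlgebra ℤ (Fin 2)) :=
  {x | ∃ w : List Bool,
    x = (w.map (fun t => if t then abA * abB + abB * abA else abA + abB)).prod}

/-- The characteristic ab-monomial `w_S` of `S ⊆ [n]`. -/
noncomputable def wMon (n : ℕ) (S : Finset ℕ) : FreeAlgebra ℤ (Fin 2) :=
  (List.ofFn (fun i : Fin n => if (i : ℕ) + 1 ∈ S then abB else abA)).prod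



noncomputable def phi : FreeAlgebra ℤ (Fin 2) →ₐ[ℤ] MvPolynomial (Fin 2) ℤ :=
  FreeAlgebra.lift ℤ MvPolynomial.X

noncomputable def co (p : MvPolynomial (Fin 2) ℤ) (i k : ℕ) : ℤ :=
  MvPolynomial.coeff (Finsupp.single 0 k + Finsupp.single 1 i) p

lemma fs_apply0 (i k : ℕ) :
    ((Finsupp.single (0:Fin 2) k + Finsupp.single 1 i) : Fin 2 →₀ ℕ) 0 = k := by
  simp [Finsupp.single_apply]

lemma fs_apply1 (i k : ℕ) :
    ((Finsupp.single (0:Fin 2) k + Finsupp.single 1 i) : Fin 2 →₀ ℕ) 1 = i := by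
  simp [Finsupp.single_apply]

lemma fs_sub1 (i k : ℕ) : (Finsupp.single (0:Fin 2) k + Finsupp.single 1 i) - Finsupp.single 1 1
    = Finsupp.single 0 k + Finsupp.single 1 (i-1) := by
  ext a; fin_cases a <;> simp [Finsupp.single_apply]

lemma fs_sub0 (i k : ℕ) : (Finsupp.single (0:Fin 2) k + Finsupp.single 1 i) - Finsupp.single 0 1
    = Finsupp.single 0 (k-1) + Finsupp.single 1 i := by
  ext a; fin_cases a <;> simp [Finsupp.single_apply]

lemma co_mul_X1 (p : MvPolynomial (Fin 2) ℤ) (i k : ℕ) :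
    co (p * X 1) i k = if i = 0 then 0 else co p (i-1) k := by
  rw [co, coeff_mul_X', fs_sub1]
  simp [Finsupp.mem_support_iff, fs_apply1, co]

lemma co_mul_X0 (p : MvPolynomial (Fin 2) ℤ) (i k : ℕ) :
    co (p * X 0) i k = if k = 0 then 0 else co p i (k-1) := by
  rw [co, coeff_mul_X', fs_sub0]
  simp [Finsupp.mem_support_iff, fs_apply0, co]

lemma fs_eq_iff (i k i' k' : ℕ) :
    (Finsupp.single (0:Fin 2) k + Finsupp.single 1 i) = Finsupp.single 0 k' + Finsupp.single 1 i'
    ↔ k = k' ∧ i = i' := by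
  constructor
  · intro hsame
    constructor
    · have := congrFun (congrArg (fun f : Fin 2 →₀ ℕ => (f : Fin 2 → ℕ)) hsame) 0
      simpa [fs_apply0] using this
    · have := congrFun (congrArg (fun f : Fin 2 →₀ ℕ => (f : Fin 2 → ℕ)) hsame) 1
      simpa [fs_apply1] using this
  · rintro ⟨rfl, rfl⟩; rfl

lemma co_add (p q : MvPolynomial (Fin 2) ℤ) (i k : ℕ) :
    co (p + q) i k = co p i k + co q i k := by simp [co, MvPolynomial.coeff_add]

lemma co_zero (i k : ℕ) : co 0 i k = 0 := by simp [co]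

lemma co_smul (z : ℤ) (p : MvPolynomial (Fin 2) ℤ) (i k : ℕ) :
    co (z • p) i k = z * co p i k := rfl

lemma co_one (i k : ℕ) : co 1 i k = if i = 0 ∧ k = 0 then 1 else 0 := by
  have h0 : (Finsupp.single (0:Fin 2) 0 + Finsupp.single 1 0) = (0 : Fin 2 →₀ ℕ) := by simp
  rw [co, MvPolynomial.coeff_one]
  by_cases h : i = 0 ∧ k = 0
  · obtain ⟨rfl, rfl⟩ := h; simp [h0]
  · rw [if_neg, if_neg h]
    intro hc
    have := (fs_eq_iff i k 0 0).1 (by rw [← hc, h0])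
    exact h ⟨this.2, this.1⟩

/-- symmetric, homogeneous of degree `N`, nonneg, rising to the middle -/
def SU (N : ℕ) (p : MvPolynomial (Fin 2) ℤ) : Prop :=
  (∀ i k, i + k ≠ N → co p i k = 0) ∧
  (∀ i k, 0 ≤ co p i k) ∧
  (∀ i k, co p i k = co p k i) ∧
  (∀ i j, i ≤ j → 2*j ≤ N → co p i (N-i) ≤ co p j (N-j))

lemma SU.ris' {N p} (h : SU N p) {i j : ℕ} (hij : i ≤ j) (hj : 2*j ≤ N+1) :
    co p i (N-i) ≤ co p j (N-j) := by
  rcases Nat.lt_or_ge (2*j) (N+1) with hlt | hge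
  · exact h.2.2.2 i j hij (by omega)
  · have h2 : 2*j = N+1 := by omega
    rcases Nat.eq_or_lt_of_le hij with rfl | hlt'
    · exact le_refl _
    · have hj1 : 1 ≤ j := by omega
      have hsym : co p j (N-j) = co p (j-1) (N-(j-1)) := by
        rw [h.2.2.1 j (N-j)]
        congr 1 <;> omega
      rw [hsym]
      exact h.2.2.2 i (j-1) (by omega) (by omega)

lemma SU.fall {N p} (h : SU N p) {i j : ℕ} (hij : i ≤ j) (hjN : j ≤ N) (hi : N ≤ 2*i+1) :
    co p j (N-j) ≤ co p i (N-i) := by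
  have hsj : co p j (N-j) = co p (N-j) (N-(N-j)) := by
    rw [h.2.2.1]; congr 1; omega
  have hsi : co p i (N-i) = co p (N-i) (N-(N-i)) := by
    rw [h.2.2.1]; congr 1; omega
  rw [hsj, hsi]
  exact h.ris' (by omega) (by omega)

lemma co_mul_c (p : MvPolynomial (Fin 2) ℤ) (i k : ℕ) :
    co (p * (X 0 + X 1)) i k
    = (if k = 0 then 0 else co p i (k-1)) + (if i = 0 then 0 else co p (i-1) k) := by
  rw [mul_add, co_add, co_mul_X0, co_mul_X1]

lemma co_mul_d (p : MvPolynomial (Fin 2) ℤ) (i k : ℕ) :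
    co (p * (X 0 * X 1 + X 1 * X 0)) i k
    = 2 * (if i = 0 ∨ k = 0 then 0 else co p (i-1) (k-1)) := by
  have h1 : p * (X (0:Fin 2) * X 1 + X 1 * X 0) = (p * X 0) * X 1 + (p * X 1) * X 0 := by ring
  rw [h1, co_add, co_mul_X1, co_mul_X0]
  by_cases hi : i = 0 <;> by_cases hk : k = 0 <;>
    simp [hi, hk, co_mul_X0, co_mul_X1] <;> ring

lemma SU_one : SU 0 1 := by
  refine ⟨?_, ?_, ?_, ?_⟩
  · intro i k h; rw [co_one, if_neg]; omega
  · intro i k; rw [co_one]; split <;> norm_num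
  · intro i k; rw [co_one, co_one]; by_cases h : i = 0 ∧ k = 0
    · obtain ⟨rfl, rfl⟩ := h; rfl
    · rw [if_neg h, if_neg (by tauto)]
  · intro i j hij hj
    have : i = 0 := by omega
    have : j = 0 := by omega
    subst_vars; exact le_refl _

lemma s_mul_c {N : ℕ} {p : MvPolynomial (Fin 2) ℤ} (i : ℕ) (hiN : i ≤ N) :
    co (p * (X 0 + X 1)) i (N+1-i)
    = co p i (N-i) + (if i = 0 then 0 else co p (i-1) (N-(i-1))) := by
  rw [co_mul_c, if_neg (show ¬(N+1-i = 0) by omega)]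
  have h2 : N+1-i-1 = N-i := by omega
  rw [h2]
  by_cases hi : i = 0
  · simp [hi]
  · rw [if_neg hi, if_neg hi, (show N+1-i = N-(i-1) by omega)]

lemma s_mul_d {N : ℕ} {p : MvPolynomial (Fin 2) ℤ} (i : ℕ) (hi1 : 1 ≤ i) (hiN : i ≤ N+1) :
    co (p * (X 0 * X 1 + X 1 * X 0)) i (N+2-i) = 2 * co p (i-1) (N-(i-1)) := by
  rw [co_mul_d, if_neg (show ¬(i = 0 ∨ N+2-i = 0) by omega),
    (show N+2-i-1 = N-(i-1) by omega)]

lemma SU_mul_c {N p} (h : SU N p) : SU (N+1) (p * (X 0 + X 1)) := by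
  refine ⟨?_, ?_, ?_, ?_⟩
  · intro i k hik; rw [co_mul_c]
    have e1 : (if k = 0 then (0:ℤ) else co p i (k-1)) = 0 := by
      split; · rfl
      · exact h.1 _ _ (by omega)
    have e2 : (if i = 0 then (0:ℤ) else co p (i-1) k) = 0 := by
      split; · rfl
      · exact h.1 _ _ (by omega)
    rw [e1, e2]; ring
  · intro i k; rw [co_mul_c]
    apply add_nonneg
    · split; · exact le_refl _
      · exact h.2.1 _ _
    · split; · exact le_refl _
      · exact h.2.1 _ _
  · intro i k; rw [co_mul_c, co_mul_c, h.2.2.1 i (k-1), h.2.2.1 (i-1) k]; ring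
  · intro i j hij hj
    rw [s_mul_c i (by omega), s_mul_c j (by omega)]
    apply add_le_add (h.ris' hij (by omega))
    by_cases hi : i = 0
    · rw [if_pos hi]
      split; · exact le_refl _
      · exact h.2.1 _ _
    · rw [if_neg hi, if_neg (by omega)]
      exact h.ris' (by omega) (by omega)

lemma SU_mul_d {N p} (h : SU N p) : SU (N+2) (p * (X 0 * X 1 + X 1 * X 0)) := by
  refine ⟨?_, ?_, ?_, ?_⟩
  · intro i k hik; rw [co_mul_d]
    have e : (if i = 0 ∨ k = 0 then (0:ℤ) else co p (i-1) (k-1)) = 0 := by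
      split; · rfl
      · exact h.1 _ _ (by omega)
    rw [e]; ring
  · intro i k; rw [co_mul_d]
    have : (0:ℤ) ≤ (if i = 0 ∨ k = 0 then (0:ℤ) else co p (i-1) (k-1)) := by
      split; · exact le_refl _
      · exact h.2.1 _ _
    linarith
  · intro i k; rw [co_mul_d, co_mul_d, h.2.2.1 (i-1) (k-1)]
    by_cases hi : i = 0 <;> by_cases hk : k = 0 <;> simp [hi, hk]
  · intro i j hij hj
    by_cases hi0 : i = 0
    · subst hi0
      rw [co_mul_d, if_pos (by tauto)]
      rw [co_mul_d]
      have : (0:ℤ) ≤ (if j = 0 ∨ N+2-j = 0 then (0:ℤ) else co p (j-1) (N+2-j-1)) := by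
        split; · exact le_refl _
        · exact h.2.1 _ _
      linarith
    · rw [s_mul_d i (by omega) (by omega), s_mul_d j (by omega) (by omega)]
      have := h.ris' (show i-1 ≤ j-1 by omega) (show 2*(j-1) ≤ N+1 by omega)
      linarith

lemma SU_word (w : List Bool) :
    SU ((w.map fun t => if t then 2 else 1).sum)
      ((w.map fun t => if t then X (0:Fin 2) * X 1 + X 1 * X 0 else X 0 + X 1).prod) := by
  induction w with
  | nil => simpa using SU_one
  | cons t w ih =>
    simp only [List.map_cons, List.prod_cons, List.sum_cons]
    rw [mul_comm]
    cases t
    · simpa [Nat.add_comm] using SU_mul_c ih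
    · simpa [Nat.add_comm] using SU_mul_d ih

def UpTo (n : ℕ) (F : ℕ → ℤ) : Prop := ∀ i j, i ≤ j → 2*j ≤ n → F i ≤ F j
def DownFrom (n : ℕ) (F : ℕ → ℤ) : Prop := ∀ i j, n ≤ 2*i → i ≤ j → j ≤ n → F j ≤ F i

lemma mono_case_a {N : ℕ} {p : MvPolynomial (Fin 2) ℤ} (h : SU N p) (n : ℕ) :
    UpTo n (fun i => co (p * X 0) i (n-i)) ∧ DownFrom n (fun i => co (p * X 0) i (n-i)) := by
  have hnn : ∀ m k, (0:ℤ) ≤ co (p * X 0) m k := by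
    intro m k; rw [co_mul_X0]
    split; · exact le_refl _
    · exact h.2.1 _ _
  by_cases hd : N + 1 = n
  · subst hd
    have Ei : ∀ m, m ≤ N → co (p * X 0) m (N+1-m) = co p m (N-m) := by
      intro m hm
      rw [co_mul_X0, if_neg (show ¬(N+1-m = 0) by omega), show N+1-m-1 = N-m by omega]
    constructor
    · intro i j hij hj
      simp only
      rw [Ei i (by omega), Ei j (by omega)]
      exact h.ris' hij (by omega)
    · intro i j hi hij hj
      simp only
      rcases Nat.lt_or_ge j (N+1) with hj' | hj'
      · rw [Ei i (by omega), Ei j (by omega)]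
        exact h.fall hij (by omega) (by omega)
      · have hje : j = N+1 := by omega
        subst hje
        rw [co_mul_X0, if_pos (by omega)]
        exact hnn _ _
  · have hz : ∀ m, m ≤ n → co (p * X 0) m (n-m) = 0 := by
      intro m hm
      rw [co_mul_X0]
      split; · rfl
      · exact h.1 _ _ (by omega)
    constructor
    · intro i j hij hj; simp only; rw [hz i (by omega), hz j (by omega)]
    · intro i j hi hij hj; simp only; rw [hz i (by omega), hz j (by omega)]

lemma mono_case_b {N : ℕ} {p : MvPolynomial (Fin 2) ℤ} (h : SU N p) (n : ℕ) :
    UpTo n (fun i => co (p * X 1) i (n-i)) ∧ DownFrom n (fun i => co (p * X 1) i (n-i)) := by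
  have hnn : ∀ m k, (0:ℤ) ≤ co (p * X 1) m k := by
    intro m k; rw [co_mul_X1]
    split; · exact le_refl _
    · exact h.2.1 _ _
  by_cases hd : N + 1 = n
  · subst hd
    have Ei : ∀ m, 1 ≤ m → m ≤ N+1 → co (p * X 1) m (N+1-m) = co p (m-1) (N-(m-1)) := by
      intro m hm1 hm2
      rw [co_mul_X1, if_neg (by omega), show N+1-m = N-(m-1) by omega]
    constructor
    · intro i j hij hj
      simp only
      by_cases hi0 : i = 0
      · subst hi0
        rw [co_mul_X1, if_pos rfl]
        exact hnn _ _
      · rw [Ei i (by omega) (by omega), Ei j (by omega) (by omega)]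
        exact h.ris' (by omega) (by omega)
    · intro i j hi hij hj
      simp only
      rw [Ei i (by omega) (by omega), Ei j (by omega) (by omega)]
      exact h.fall (by omega) (by omega) (by omega)
  · have hz : ∀ m, m ≤ n → co (p * X 1) m (n-m) = 0 := by
      intro m hm
      rw [co_mul_X1]
      split; · rfl
      · exact h.1 _ _ (by omega)
    constructor
    · intro i j hij hj; simp only; rw [hz i (by omega), hz j (by omega)]
    · intro i j hi hij hj; simp only; rw [hz i (by omega), hz j (by omega)]

lemma mono_case_d {N : ℕ} {p : MvPolynomial (Fin 2) ℤ} (h : SU N p) (n : ℕ) :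
    UpTo n (fun i => co (p * (X 0 * X 1 + X 1 * X 0)) i (n-i)) ∧
      DownFrom n (fun i => co (p * (X 0 * X 1 + X 1 * X 0)) i (n-i)) := by
  have hnn : ∀ m k, (0:ℤ) ≤ co (p * (X 0 * X 1 + X 1 * X 0)) m k := by
    intro m k; rw [co_mul_d]
    have : (0:ℤ) ≤ (if m = 0 ∨ k = 0 then (0:ℤ) else co p (m-1) (k-1)) := by
      split; · exact le_refl _
      · exact h.2.1 _ _
    linarith
  by_cases hd : N + 2 = n
  · subst hd
    constructor
    · intro i j hij hj
      simp only
      by_cases hi0 : i = 0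
      · subst hi0
        rw [co_mul_d, if_pos (by tauto)]
        simpa using hnn _ _
      · rw [s_mul_d i (by omega) (by omega), s_mul_d j (by omega) (by omega)]
        have := h.ris' (show i-1 ≤ j-1 by omega) (show 2*(j-1) ≤ N+1 by omega)
        linarith
    · intro i j hi hij hj
      simp only
      rcases Nat.lt_or_ge j (N+2) with hj' | hj'
      · rw [s_mul_d i (by omega) (by omega), s_mul_d j (by omega) (by omega)]
        have := h.fall (show i-1 ≤ j-1 by omega) (show j-1 ≤ N by omega) (by omega)
        linarith
      · have hje : j = N+2 := by omega
        subst hje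
        rw [co_mul_d, if_pos (by omega)]
        simpa using hnn _ _
  · have hz : ∀ m, m ≤ n → co (p * (X 0 * X 1 + X 1 * X 0)) m (n-m) = 0 := by
      intro m hm
      rw [co_mul_d]
      by_cases hc : m = 0 ∨ n - m = 0
      · rw [if_pos hc]; ring
      · rw [if_neg hc, h.1 _ _ (by omega)]; ring
    constructor
    · intro i j hij hj; simp only; rw [hz i (by omega), hz j (by omega)]
    · intro i j hi hij hj; simp only; rw [hz i (by omega), hz j (by omega)]

lemma phi_a : phi abA = X 0 := FreeAlgebra.lift_ι_apply _ _
lemma phi_b : phi abB = X 1 := FreeAlgebra.lift_ι_apply _ _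

lemma phi_cdword (w : List Bool) :
    phi ((w.map fun t => if t then abA * abB + abB * abA else abA + abB).prod)
      = (w.map fun t => if t then X (0:Fin 2) * X 1 + X 1 * X 0 else X 0 + X 1).prod := by
  rw [map_list_prod, List.map_map]
  congr 1
  apply List.map_congr_left
  intro t _
  cases t <;> simp [phi_a, phi_b, map_add, map_mul]

lemma mono_mul (n : ℕ) (M : MvPolynomial (Fin 2) ℤ)
    (hM : ∀ (N : ℕ) (q : MvPolynomial (Fin 2) ℤ), SU N q →
      UpTo n (fun i => co (q * M) i (n-i)) ∧ DownFrom n (fun i => co (q * M) i (n-i)))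
    {Φ : FreeAlgebra ℤ (Fin 2)} (hΦ : Φ ∈ AddSubmonoid.closure cdMonomials) :
    UpTo n (fun i => co (phi Φ * M) i (n-i)) ∧
      DownFrom n (fun i => co (phi Φ * M) i (n-i)) := by
  induction hΦ using AddSubmonoid.closure_induction with
  | mem x hx =>
      obtain ⟨w, rfl⟩ := hx
      rw [phi_cdword]
      exact hM _ _ (SU_word w)
  | zero =>
      have e : ∀ i k, co (phi 0 * M) i k = 0 := by
        intro i k; rw [map_zero, zero_mul, co_zero]
      constructor
      · intro i j hij hj; simp only; rw [e, e]
      · intro i j hi hij hj; simp only; rw [e, e]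
  | add x y hx hy ihx ihy =>
      have e : ∀ i k, co (phi (x+y) * M) i k = co (phi x * M) i k + co (phi y * M) i k := by
        intro i k; rw [map_add, add_mul, co_add]
      constructor
      · intro i j hij hj; simp only; rw [e, e]
        exact add_le_add (ihx.1 i j hij hj) (ihy.1 i j hij hj)
      · intro i j hi hij hj; simp only; rw [e, e]
        exact add_le_add (ihx.2 i j hi hij hj) (ihy.2 i j hi hij hj)

lemma card_filter_fin (n : ℕ) (S : Finset ℕ) (hS : S ⊆ Finset.Icc 1 n) :
    (Finset.univ.filter fun i : Fin n => (i:ℕ)+1 ∈ S).card = S.card := by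
  refine Finset.card_nbij (i := fun a : Fin n => (a:ℕ)+1) ?_ ?_ ?_
  · intro a ha; exact (Finset.mem_filter.1 ha).2
  · intro a _ b _ hab; simp only at hab; exact Fin.ext (by omega)
  · intro s hs
    have hmem := Finset.mem_Icc.1 (hS hs)
    refine ⟨⟨s-1, by omega⟩, Finset.mem_coe.2 (Finset.mem_filter.2 ⟨Finset.mem_univ _, ?_⟩), by simp; omega⟩
    simpa [show s-1+1 = s by omega] using hs

lemma phi_wMon (n : ℕ) (S : Finset ℕ) (hS : S ⊆ Finset.Icc 1 n) :
    phi (wMon n S) = X 1 ^ S.card * X 0 ^ (n - S.card) := by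
  rw [wMon, map_list_prod, List.map_ofFn, List.prod_ofFn]
  have e : ∀ i : Fin n, (phi ∘ fun i : Fin n => if (i:ℕ)+1 ∈ S then abB else abA) i
      = if (i:ℕ)+1 ∈ S then X 1 else X 0 := by
    intro i; by_cases hh : (i:ℕ)+1 ∈ S <;> simp [hh, phi_a, phi_b]
  rw [Finset.prod_congr rfl (fun i _ => e i), Finset.prod_ite, Finset.prod_const,
    Finset.prod_const, card_filter_fin n S hS]
  congr 1
  have h3 := Finset.card_filter_add_card_filter_not
    (s := (Finset.univ : Finset (Fin n))) (p := fun i : Fin n => (i:ℕ)+1 ∈ S)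
  simp only [Finset.card_univ, Fintype.card_fin, card_filter_fin n S hS] at h3
  congr 1
  omega

lemma co_XX (c d i k : ℕ) :
    co ((X 1 : MvPolynomial (Fin 2) ℤ) ^ c * X 0 ^ d) i k
      = if i = c ∧ k = d then 1 else 0 := by
  rw [X_pow_eq_monomial, X_pow_eq_monomial, monomial_mul, mul_one, co, coeff_monomial,
    add_comm (Finsupp.single 1 c)]
  by_cases hc : i = c ∧ k = d
  · obtain ⟨rfl, rfl⟩ := hc; simp
  · rw [if_neg hc, if_neg]
    intro hcon
    have h4 := (fs_eq_iff c d i k).1 hcon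
    exact hc ⟨h4.2.symm, h4.1.symm⟩

lemma co_phi_LHS (n : ℕ) (h : Finset ℕ → ℤ) (i : ℕ) (hi : i ≤ n) :
    co (phi (∑ S ∈ (Finset.Icc 1 n).powerset, h S • wMon n S)) i (n-i)
      = ∑ S ∈ (Finset.Icc 1 n).powerset.filter (fun S => S.card = i), h S := by
  rw [map_sum, co, MvPolynomial.coeff_sum, Finset.sum_filter]
  apply Finset.sum_congr rfl
  intro S hS
  have hsub : S ⊆ Finset.Icc 1 n := Finset.mem_powerset.1 hS
  have hcard : S.card ≤ n := by
    have := Finset.card_le_card hsub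
    simpa [Nat.card_Icc] using this
  have : phi (h S • wMon n S) = h S • (X 1 ^ S.card * X 0 ^ (n - S.card)) := by
    rw [map_zsmul, phi_wMon n S hsub]
  rw [this]
  have : MvPolynomial.coeff (Finsupp.single 0 (n-i) + Finsupp.single 1 i)
      (h S • ((X 1 : MvPolynomial (Fin 2) ℤ) ^ S.card * X 0 ^ (n - S.card)))
      = h S * co ((X 1 : MvPolynomial (Fin 2) ℤ) ^ S.card * X 0 ^ (n - S.card)) i (n-i) :=
    co_smul _ _ _ _
  rw [this, co_XX]
  by_cases hc : S.card = i
  · rw [if_pos hc, if_pos ⟨hc.symm, by omega⟩, mul_one]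
  · rw [if_neg hc, if_neg (by omega), mul_zero]

/-- Let `P` be a finite (graded) poset of rank `n` and suppose its
ab-index `Ψ_P = ∑_{S ⊆ [n]} h_S(P) w_S` can be written as
`Φᵈ·d + Φᵃ·a + Φᵇ·b` with cd-polynomials `Φᵈ, Φᵃ, Φᵇ` having non-negative
coefficients (i.e. lying in the additive monoid generated by cd-monomials).
Then the `h`-vector `(h_0, …, h_n)` of `Δ_P`, `h_i = ∑_{|S| = i} h_S(P)`,
is unimodal. -/
theorem h_vector_unimodal_of_cd_decomposition
    {P : Type} [Fintype P] [PartialOrder P] [OrderBot P] [DecidableEq P]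
    (n : ℕ) (rank : P → ℕ)
    (hrank0 : ∀ x : P, rank x = 0 ↔ x = ⊥)
    (hcov : ∀ x y : P, x ⋖ y → rank y = rank x + 1)
    (hrkn : ∀ x : P, rank x ≤ n)
    (f h : Finset ℕ → ℤ)
    (hf : ∀ S : Finset ℕ, f S =
      ((Finset.univ.powerset.filter (fun C : Finset P =>
        (∀ x ∈ C, ∀ y ∈ C, x ≤ y ∨ y ≤ x) ∧ ⊥ ∉ C ∧ C.image rank = S)).card : ℤ))
    (hh : ∀ S : Finset ℕ, h S =
      ∑ T ∈ S.powerset, (-1 : ℤ) ^ (S.card - T.card) * f T)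
    (Φd Φa Φb : FreeAlgebra ℤ (Fin 2))
    (hΦd : Φd ∈ AddSubmonoid.closure cdMonomials)
    (hΦa : Φa ∈ AddSubmonoid.closure cdMonomials)
    (hΦb : Φb ∈ AddSubmonoid.closure cdMonomials)
    (hΨ : (∑ S ∈ (Finset.Icc 1 n).powerset, h S • wMon n S) =
      Φd * (abA * abB + abB * abA) + Φa * abA + Φb * abB)
    (hvec : ℕ → ℤ)
    (hhvec : ∀ i : ℕ, hvec i =
      ∑ S ∈ (Finset.Icc 1 n).powerset.filter (fun S => S.card = i), h S) :
    ∃ p ≤ n, (∀ i j, i ≤ j → j ≤ p → hvec i ≤ hvec j) ∧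
      (∀ i j, p ≤ i → i ≤ j → j ≤ n → hvec j ≤ hvec i) := by
  have key : ∀ i, i ≤ n → hvec i =
      co (phi (Φd * (abA * abB + abB * abA) + Φa * abA + Φb * abB)) i (n-i) := by
    intro i hi
    rw [hhvec i, ← co_phi_LHS n h i hi, hΨ]
  have Ud := mono_mul n (X 0 * X 1 + X 1 * X 0) (fun _ q hq => mono_case_d hq n) hΦd
  have Ua := mono_mul n (X 0) (fun _ q hq => mono_case_a hq n) hΦa
  have Ub := mono_mul n (X 1) (fun _ q hq => mono_case_b hq n) hΦb
  have e1 : ∀ m k, co (phi (Φd * (abA * abB + abB * abA) + Φa * abA + Φb * abB)) m k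
      = co (phi Φd * (X 0 * X 1 + X 1 * X 0)) m k + co (phi Φa * X 0) m k
        + co (phi Φb * X 1) m k := by
    intro m k
    rw [map_add, map_add, map_mul, map_mul, map_mul, map_add, map_mul, map_mul,
      phi_a, phi_b, co_add, co_add]
  have hvU : ∀ i j, i ≤ j → 2*j ≤ n → hvec i ≤ hvec j := by
    intro i j hij hj
    rw [key i (by omega), key j (by omega), e1, e1]
    exact add_le_add (add_le_add (Ud.1 i j hij hj) (Ua.1 i j hij hj)) (Ub.1 i j hij hj)
  have hvD : ∀ i j, n ≤ 2*i → i ≤ j → j ≤ n → hvec j ≤ hvec i := by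
    intro i j hi hij hj
    rw [key i (by omega), key j (by omega), e1, e1]
    exact add_le_add (add_le_add (Ud.2 i j hi hij hj) (Ua.2 i j hi hij hj))
      (Ub.2 i j hi hij hj)
  by_cases hc : hvec (n/2) ≤ hvec (n - n/2)
  · refine ⟨n - n/2, by omega, ?_, ?_⟩
    · intro i j hij hjp
      by_cases h2 : 2*j ≤ n
      · exact hvU i j hij h2
      · have hje : j = n - n/2 := by omega
        rcases Nat.eq_or_lt_of_le hij with rfl | hlt
        · exact le_refl _
        · calc hvec i ≤ hvec (n/2) := hvU i (n/2) (by omega) (by omega)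
            _ ≤ hvec (n - n/2) := hc
            _ = hvec j := by rw [hje]
    · intro i j hpi hij hjn
      exact hvD i j (by omega) hij hjn
  · refine ⟨n/2, by omega, ?_, ?_⟩
    · intro i j hij hjp
      exact hvU i j hij (by omega)
    · intro i j hpi hij hjn
      by_cases hni : n ≤ 2*i
      · exact hvD i j hni hij hjn
      · have hie : i = n/2 := by omega
        rcases Nat.eq_or_lt_of_le hij with rfl | hlt
        · exact le_refl _
        · calc hvec j ≤ hvec (n - n/2) := hvD (n - n/2) j (by omega) (by omega) hjn
            _ ≤ hvec (n/2) := le_of_lt (by omega)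
            _ = hvec i := by rw [hie]
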